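/- The following are equivalent: (a) the system is T-Δ-ε-acceptable, i.e., for every c : ι, μ c {r | r is T-Δ-acceptable} ≥ 1 - ε; (b) there exists acc : Set Run with (∀ c, μ c acc ≥ 1 - ε) such that every r ∈ acc satisfies: for all i, j, X, m, honest r m i and X a T-prefix of ledger r m i imply that for all m' ≥ m + Δ, honest r m' j implies X is a T-prefix of ledger r m' j; (c) there exists acc : Set Run with (∀ c, μ c acc ≥ 1 - ε) such that every r ∈ acc satisfies: for all i, X, m, honest r m i and X a T-prefix of ledger r m i imply that for all m' ≥ m + Δ, (E_H^{acc} TP_X) (r, m') holds; (d) there exists acc : Set Run with (∀ c, μ c acc ≥ 1 - ε) such that every r ∈ acc satisfies: for all i, X, m, honest r m i and X a T-prefix of ledger r m i imply (C^{acc} TP_X) (r, m). -/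
import Mathlib


/-- `X` is a `T`-prefix of `L`: `X` is a prefix of `L` and `X.length + T ≤ L.length`. -/
def TPrefix {Tx : Type*} (T : ℕ) (X L : List Tx) : Prop :=
  X <+: L ∧ X.length + T ≤ L.length

/-- The run `r` of a system is `T`-`Δ`-acceptable. -/
def Acceptable {Run Agent Tx : Type*} (T Δ : ℕ) (honest : Run → ℕ → Agent → Prop)
    (ledger : Run → ℕ → Agent → List Tx) (r : Run) : Prop :=
  ∀ (m m' : ℕ) (i j : Agent) (X : List Tx), m ≤ m' → honest r m i →
    TPrefix T X (ledger r m i) → honest r (m' + Δ) j →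
    TPrefix T X (ledger r (m' + Δ) j)

/-- `q ∼_i p`: agent `i` cannot distinguish the points `q` and `p`
(`i`'s local state is the same at both points, and `i` is present at both). -/
def Sim {Run Agent σ : Type*} (localState : Run → ℕ → Agent → Option σ)
    (i : Agent) (q p : Run × ℕ) : Prop :=
  localState p.1 p.2 i = localState q.1 q.2 i ∧ (localState p.1 p.2 i).isSome

/-- The agent-relative formula `TP_X`: "`X` is a `T`-prefix of my ledger". -/
def TP {Run Agent Tx : Type*} (T : ℕ) (ledger : Run → ℕ → Agent → List Tx)
    (X : List Tx) (p : Run × ℕ) (i : Agent) : Prop :=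
  TPrefix T X (ledger p.1 p.2 i)

/-- The `acc`-guarded operator `E_H^{acc}`: `(E_H^{acc} φ) (r,m)` iff for every agent
`j` honest at `(r,m)` and every point `(r',m') ∼_j (r,m)` with `j` honest there and
`r' ∈ acc`, `φ (r',m') j` holds. -/
def EHacc {Run Agent σ : Type*} (honest : Run → ℕ → Agent → Prop)
    (localState : Run → ℕ → Agent → Option σ) (acc : Set Run)
    (φ : Run × ℕ → Agent → Prop) (p : Run × ℕ) : Prop :=
  ∀ j, honest p.1 p.2 j → ∀ q, Sim localState j q p → honest q.1 q.2 j →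
    q.1 ∈ acc → φ q j

/-- `(○^Δ□ φ) (r, m)`: `φ` holds at `(r, m')` for all `m' ≥ m + Δ`. -/
def NextBox {Run : Type*} (Δ : ℕ) (φ : Run × ℕ → Prop) (p : Run × ℕ) : Prop :=
  ∀ m', p.2 + Δ ≤ m' → φ (p.1, m')

/-- `IterAcc Δ honest localState acc n φ` is `(○^Δ□ ∘ E_H^{acc})^{n+1} φ`:
`(○^Δ□ ∘ E_H^{acc})^1 φ = ○^Δ□(E_H^{acc} φ)` and
`(○^Δ□ ∘ E_H^{acc})^{n+1} φ = ○^Δ□(E_H^{acc} ((○^Δ□ ∘ E_H^{acc})^n φ))`. -/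
def IterAcc {Run Agent σ : Type*} (Δ : ℕ) (honest : Run → ℕ → Agent → Prop)
    (localState : Run → ℕ → Agent → Option σ) (acc : Set Run) :
    ℕ → (Run × ℕ → Agent → Prop) → (Run × ℕ → Prop)
  | 0, φ => NextBox Δ (EHacc honest localState acc φ)
  | n + 1, φ => NextBox Δ (EHacc honest localState acc
      (fun q _ => IterAcc Δ honest localState acc n φ q))

/-- `acc`-relative `Δ`-`□`-common knowledge among the honest agents:
`(C^{acc} φ) p := ∀ n ≥ 1, ((○^Δ□ ∘ E_H^{acc})^n φ) p`. -/
def CKacc {Run Agent σ : Type*} (Δ : ℕ) (honest : Run → ℕ → Agent → Prop)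
    (localState : Run → ℕ → Agent → Option σ) (acc : Set Run)
    (φ : Run × ℕ → Agent → Prop) (p : Run × ℕ) : Prop :=
  ∀ n : ℕ, IterAcc Δ honest localState acc n φ p

/-- Theorem 7 (probabilistic characterization of blockchain protocols): the four
conditions are equivalent. -/
theorem blockchain_characterization_prob {Run Agent Tx σ ι : Type*}
    [MeasurableSpace Run] (T Δ : ℕ)
    (honest : Run → ℕ → Agent → Prop) (ledger : Run → ℕ → Agent → List Tx)
    (localState : Run → ℕ → Agent → Option σ)
    (hpresent : ∀ (r : Run) (m : ℕ) (i : Agent), honest r m i → localState r m i ≠ none)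
    (hledger : ∀ (i : Agent) (q p : Run × ℕ), Sim localState i q p →
      ledger q.1 q.2 i = ledger p.1 p.2 i)
    (μ : ι → MeasureTheory.Measure Run)
    (hprob : ∀ c : ι, MeasureTheory.IsProbabilityMeasure (μ c))
    (ε : ℝ) (hε0 : 0 ≤ ε) (hε1 : ε ≤ 1) :
    List.TFAE
      [ -- (a) the system is T-Δ-ε-acceptable
        (∀ c : ι, ENNReal.ofReal (1 - ε) ≤ μ c {r | Acceptable T Δ honest ledger r}),
        -- (b)
        (∃ acc : Set Run, (∀ c : ι, ENNReal.ofReal (1 - ε) ≤ μ c acc) ∧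
          ∀ r ∈ acc, ∀ (i j : Agent) (X : List Tx) (m : ℕ),
            honest r m i → TPrefix T X (ledger r m i) →
            ∀ m', m + Δ ≤ m' → honest r m' j → TPrefix T X (ledger r m' j)),
        -- (c)
        (∃ acc : Set Run, (∀ c : ι, ENNReal.ofReal (1 - ε) ≤ μ c acc) ∧
          ∀ r ∈ acc, ∀ (i : Agent) (X : List Tx) (m : ℕ),
            honest r m i → TPrefix T X (ledger r m i) →
            ∀ m', m + Δ ≤ m' →
              EHacc honest localState acc (TP T ledger X) (r, m')),
        -- (d)
        (∃ acc : Set Run, (∀ c : ι, ENNReal.ofReal (1 - ε) ≤ μ c acc) ∧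
          ∀ r ∈ acc, ∀ (i : Agent) (X : List Tx) (m : ℕ),
            honest r m i → TPrefix T X (ledger r m i) →
              CKacc Δ honest localState acc (TP T ledger X) (r, m)) ] := by
  tfae_have 1 → 2 := by
    intro ha
    refine ⟨{r | Acceptable T Δ honest ledger r}, ha, ?_⟩
    intro r hr i j X m hi hX m' hm' hj
    have : m' = (m' - Δ) + Δ := by omega
    rw [this] at hj ⊢
    exact hr m (m' - Δ) i j X (by omega) hi hX hj
  tfae_have 2 → 3 := by
    rintro ⟨acc, hacc, h⟩
    refine ⟨acc, hacc, ?_⟩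
    intro r hr i X m hi hX m' hm' j hj q hq hqh hqa
    have : TPrefix T X (ledger r m' j) := h r hr i j X m hi hX m' hm' hj
    have he := hledger j q (r, m') hq
    show TPrefix T X (ledger q.1 q.2 j)
    rw [he]; exact this
  tfae_have 3 → 4 := by
    rintro ⟨acc, hacc, h⟩
    refine ⟨acc, hacc, ?_⟩
    suffices key : ∀ n, ∀ r ∈ acc, ∀ (i : Agent) (X : List Tx) (m : ℕ),
        honest r m i → TPrefix T X (ledger r m i) →
        IterAcc Δ honest localState acc n (TP T ledger X) (r, m) by
      intro r hr i X m hi hX n; exact key n r hr i X m hi hX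
    intro n
    induction n with
    | zero =>
      intro r hr i X m hi hX m' hm'
      exact h r hr i X m hi hX m' hm'
    | succ n ih =>
      intro r hr i X m hi hX m' hm' j hj q hq hqh hqa
      have hTP : TP T ledger X q j := h r hr i X m hi hX m' hm' j hj q hq hqh hqa
      exact ih q.1 hqa j X q.2 hqh hTP
  tfae_have 4 → 1 := by
    rintro ⟨acc, hacc, h⟩
    intro c
    refine le_trans (hacc c) (MeasureTheory.measure_mono ?_)
    intro r hr
    intro m m' i j X hm hi hX hj
    have h0 := h r hr i X m hi hX 0
    have hE := h0 (m' + Δ) (by omega)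
    have hsome : (localState r (m' + Δ) j).isSome := by
      have := hpresent r (m' + Δ) j hj
      exact Option.isSome_iff_ne_none.mpr this
    exact hE j hj (r, m' + Δ) ⟨rfl, hsome⟩ hj hr
  tfae_finish
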